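/- arXiv:1809.07495 — 3 statements merged into one kernel-verified Lean document; each statement's English description precedes it below -/
import Mathlib

section
/- Given a separation grid in a model category, a cofibrant object T, a map η : T → Q, and a map κ₀ : T → F^{0,k+1} with Φ⁰∘κ₀ left homotopic to q₁∘φ¹∘η, if the two equivalent conditions of the Separation Lemma hold (i.e. the induced κ₁ satisfies s∘κ₁ left homotopic to Γ_{k−1}∘η), then after changing κ₁ within its left homotopy class (and accordingly replacing κ₀ by u₁∘κ₁ within its homotopy class), without altering Γ_{k−1}, the map η lifts along p_{k−1}: there exists f : T → P with p_{k−1}∘f = η whose composite with the top-row maps P → F^{1,k+1} equals the altered κ₁. -/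
open CategoryTheory CategoryTheory.Limits

universe v u

noncomputable section

/-- A (Quillen) model structure on a category `ℰ`, given by the classes of weak
equivalences, fibrations and cofibrations, satisfying the usual axioms. -/
structure ModelStruct (ℰ : Type u) [Category.{v} ℰ] : Type (max u v) where
  weq : MorphismProperty ℰ
  fib : MorphismProperty ℰ
  cof : MorphismProperty ℰ
  weq_comp : ∀ {X Y Z : ℰ} (f : X ⟶ Y) (g : Y ⟶ Z), weq f → weq g → weq (f ≫ g)
  weq_cancel_left : ∀ {X Y Z : ℰ} (f : X ⟶ Y) (g : Y ⟶ Z), weq f → weq (f ≫ g) → weq g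
  weq_cancel_right : ∀ {X Y Z : ℰ} (f : X ⟶ Y) (g : Y ⟶ Z), weq g → weq (f ≫ g) → weq f
  weq_retract : ∀ {X Y X' Y' : ℰ} (f : X ⟶ Y) (g : X' ⟶ Y')
    (i : Arrow.mk f ⟶ Arrow.mk g) (r : Arrow.mk g ⟶ Arrow.mk f),
    i ≫ r = 𝟙 _ → weq g → weq f
  fib_retract : ∀ {X Y X' Y' : ℰ} (f : X ⟶ Y) (g : X' ⟶ Y')
    (i : Arrow.mk f ⟶ Arrow.mk g) (r : Arrow.mk g ⟶ Arrow.mk f),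
    i ≫ r = 𝟙 _ → fib g → fib f
  cof_retract : ∀ {X Y X' Y' : ℰ} (f : X ⟶ Y) (g : X' ⟶ Y')
    (i : Arrow.mk f ⟶ Arrow.mk g) (r : Arrow.mk g ⟶ Arrow.mk f),
    i ≫ r = 𝟙 _ → cof g → cof f
  lift_acof_fib : ∀ {A B X Y : ℰ} (i : A ⟶ B) (p : X ⟶ Y),
    cof i → weq i → fib p → HasLiftingProperty i p
  lift_cof_afib : ∀ {A B X Y : ℰ} (i : A ⟶ B) (p : X ⟶ Y),
    cof i → fib p → weq p → HasLiftingProperty i p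
  fact_acof_fib : ∀ {X Y : ℰ} (f : X ⟶ Y), ∃ (Z : ℰ) (i : X ⟶ Z) (p : Z ⟶ Y),
    cof i ∧ weq i ∧ fib p ∧ i ≫ p = f
  fact_cof_afib : ∀ {X Y : ℰ} (f : X ⟶ Y), ∃ (Z : ℰ) (i : X ⟶ Z) (p : Z ⟶ Y),
    cof i ∧ fib p ∧ weq p ∧ i ≫ p = f

variable {ℰ : Type u} [Category.{v} ℰ]

/-- An object is cofibrant if the map from the initial object is a cofibration. -/
def ModelStruct.Cofibrant [HasInitial ℰ] (M : ModelStruct ℰ) (X : ℰ) : Prop :=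
  M.cof (initial.to X)

/-- An object is fibrant if the map to the terminal object is a fibration. -/
def ModelStruct.Fibrant [HasTerminal ℰ] (M : ModelStruct ℰ) (X : ℰ) : Prop :=
  M.fib (terminal.from X)

/-- Left homotopy of two maps, via some cylinder object. -/
def LeftHomotopic [HasBinaryCoproducts ℰ] (M : ModelStruct ℰ) {X Y : ℰ} (f g : X ⟶ Y) : Prop :=
  ∃ (C : ℰ) (i₁ i₂ : X ⟶ C) (p : C ⟶ X) (H : C ⟶ Y),
    M.cof (coprod.desc i₁ i₂) ∧ M.weq p ∧
    i₁ ≫ p = 𝟙 X ∧ i₂ ≫ p = 𝟙 X ∧ i₁ ≫ H = f ∧ i₂ ≫ H = g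

/-- Right homotopy of two maps, via some path object. -/
def RightHomotopic [HasBinaryProducts ℰ] (M : ModelStruct ℰ) {X Y : ℰ} (f g : X ⟶ Y) : Prop :=
  ∃ (P : ℰ) (p₁ p₂ : P ⟶ Y) (s : Y ⟶ P) (H : X ⟶ P),
    M.fib (prod.lift p₁ p₂) ∧ M.weq s ∧
    s ≫ p₁ = 𝟙 Y ∧ s ≫ p₂ = 𝟙 Y ∧ H ≫ p₁ = f ∧ H ≫ p₂ = g

/-- A weak lattice: a locally finite directed indexing category with a degree function. -/
structure WeakLattice (J : Type) [SmallCategory J] where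
  deg : J → ℕ
  locallyFinite : ∀ x y : J, Finite (x ⟶ y)
  connected : IsConnected J
  finitePerDeg : ∀ n : ℕ, Finite { t : J // deg t = n }
  hom_deg_lt : ∀ {x y : J}, (x ⟶ y) → x ≠ y → deg y < deg x
  endo_eq_id : ∀ (x : J) (f : x ⟶ x), f = 𝟙 x
  to_deg_zero : ∀ x : J, ∃ t : J, deg t = 0 ∧ Nonempty (x ⟶ t)

variable {J : Type} [SmallCategory J]

namespace WeakLattice

/-- Objects of degree at most `k` admitting a map from `x`. -/
def Below (L : WeakLattice J) (x : J) (k : ℕ) (t : J) : Prop :=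
  L.deg t ≤ k ∧ Nonempty (x ⟶ t)

/-- The category `∂𝒥ₓᵏ`. -/
abbrev Bdry (L : WeakLattice J) (x : J) (k : ℕ) : Type :=
  ObjectProperty.FullSubcategory (L.Below x k)

/-- The category `𝒥ₓᵏ`: `x` together with `∂𝒥ₓᵏ`. -/
abbrev Jxk (L : WeakLattice J) (x : J) (k : ℕ) : Type :=
  ObjectProperty.FullSubcategory (fun t => t = x ∨ L.Below x k t)

def bdryIncl (L : WeakLattice J) (x : J) (k : ℕ) : L.Bdry x k ⥤ J :=
  ObjectProperty.ι _

def bdryToJxk (L : WeakLattice J) (x : J) (k : ℕ) : L.Bdry x k ⥤ L.Jxk x k :=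
  ObjectProperty.ιOfLE (fun _ ht => Or.inr ht)

/-- `x` as an object of `𝒥ₓᵏ`. -/
def xObj (L : WeakLattice J) (x : J) (k : ℕ) : L.Jxk x k := ⟨x, Or.inl rfl⟩

end WeakLattice

variable [HasLimits ℰ]

/-- The matching object `Mₓᵏ(Y)`: the limit over the comma category `(x ↓ ∂𝒥ₓᵏ)`. -/
def matchObj (L : WeakLattice J) (x : J) (k : ℕ) (Y : L.Bdry x k ⥤ ℰ) : ℰ :=
  limit (StructuredArrow.proj x (L.bdryIncl x k) ⋙ Y)

/-- Index of pairs `(t, f : x ⟶ t)` with `deg t ≤ k`. -/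
abbrev IdxLE (L : WeakLattice J) (x : J) (k : ℕ) : Type :=
  Σ t : L.Bdry x k, (x ⟶ t.obj)

/-- The product `∏_{f : x → t, deg t ≤ k} Y(t)`. -/
def prodLE (L : WeakLattice J) (x : J) (k : ℕ) (Y : L.Bdry x k ⥤ ℰ) : ℰ :=
  ∏ᶜ fun p : IdxLE L x k => Y.obj p.1

/-- The forgetful (monic) map from the matching object to the underlying product. -/
def forgetMap (L : WeakLattice J) (x : J) (k : ℕ) (Y : L.Bdry x k ⥤ ℰ) :
    matchObj L x k Y ⟶ prodLE L x k Y :=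
  Pi.lift fun p => limit.π (StructuredArrow.proj x (L.bdryIncl x k) ⋙ Y)
    (StructuredArrow.mk (Y := p.1) p.2)


variable {ℰ : Type u} [Category.{v} ℰ]

/-- A separation grid in a model category (see the Separation Lemma): objects
`F j i` for `0 ≤ j ≤ k-1` and `j+1 ≤ i ≤ k+1` together with `P` and `Q`,
horizontal maps `u`, vertical maps `d`, structure maps from `P` and `Q`, all
rectangles pullbacks, with the indicated fibrations, fibrant objects and the
monomorphism `z`.  (The data is given totally in `j`, `i`; the axioms only
constrain the entries within the stated ranges.) -/
structure SepGrid [HasTerminal ℰ] (M : ModelStruct ℰ) (k : ℕ) where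
  F : ℕ → ℕ → ℰ
  P : ℰ
  Q : ℰ
  /-- horizontal maps `u_j` (in each row `i`) -/
  u : ∀ j i : ℕ, F j i ⟶ F (j - 1) i
  /-- vertical maps (in each column `j`) -/
  d : ∀ j i : ℕ, F j i ⟶ F j (i - 1)
  /-- the map `P ⟶ F^{k-1,k+1}` -/
  Pto : P ⟶ F (k - 1) (k + 1)
  /-- the fibration `p_{k-1} : P ⟶ Q` -/
  pP : P ⟶ Q
  /-- `γ_k : Q ⟶ F^{k-1,k}` -/
  γ : Q ⟶ F (k - 1) k
  /-- `φ^j : Q ⟶ F^{j,j+1}` for `1 ≤ j ≤ k-1` -/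
  φ : ∀ j : ℕ, Q ⟶ F j (j + 1)
  pP_fib : M.fib pP
  /-- the leftmost square commutes and is a pullback -/
  left_square : IsPullback Pto pP (d (k - 1) (k + 1)) γ
  /-- every (unit) rectangle of the grid is a pullback -/
  squares : ∀ j i : ℕ, 1 ≤ j → j ≤ k - 1 → j + 2 ≤ i → i ≤ k + 1 →
    IsPullback (u j i) (d j i) (d (j - 1) i) (u j (i - 1))
  /-- the horizontal maps in rows `k+1` and `k` are fibrations -/
  row_top_fib : ∀ j : ℕ, 1 ≤ j → j ≤ k - 1 → M.fib (u j (k + 1)) ∧ M.fib (u j k)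
  /-- the staircase maps `q_j : F^{j,j+1} ⟶ F^{j-1,j+1}` are fibrations -/
  q_fib : ∀ j : ℕ, 1 ≤ j → j ≤ k - 1 → M.fib (u j (j + 1))
  /-- the staircase maps `p_j : F^{j,j+2} ⟶ F^{j-1,j+2}` are fibrations -/
  p_fib : ∀ j : ℕ, 1 ≤ j → j ≤ k - 1 → M.fib (u j (j + 2))
  /-- the vertical maps `r_j : F^{j,j+2} ⟶ F^{j,j+1}` are fibrations -/
  r_fib : ∀ j : ℕ, j ≤ k - 1 → M.fib (d j (j + 2))
  /-- the vertical maps from row `k+1` to row `k` are fibrations -/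
  vert_top_fib : ∀ j : ℕ, j ≤ k - 1 → M.fib (d j (k + 1))
  /-- `F^{0,1}` is fibrant -/
  fibrant_base : M.Fibrant (F 0 1)
  /-- the objects `F^{j,k}` are fibrant -/
  fibrant_row_k : ∀ j : ℕ, j ≤ k - 1 → M.Fibrant (F j k)
  /-- `z : F^{0,k} ⟶ F^{0,k-1}` is a monomorphism -/
  z_mono : Mono (d 0 k)

namespace SepGrid

variable [HasTerminal ℰ] {M : ModelStruct ℰ} {k : ℕ}

/-- Iterated horizontal composite `F j i ⟶ F (j - m) i`. -/
def hIter (G : SepGrid M k) (i j : ℕ) : ∀ m : ℕ, (G.F j i ⟶ G.F (j - m) i)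
  | 0 => 𝟙 _
  | m + 1 => G.hIter i j m ≫ G.u (j - m) i

/-- Iterated vertical composite `F j i ⟶ F j (i - m)`. -/
def vIter (G : SepGrid M k) (j i : ℕ) : ∀ m : ℕ, (G.F j i ⟶ G.F j (i - m))
  | 0 => 𝟙 _
  | m + 1 => G.vIter j i m ≫ G.d j (i - m)

/-- `Γ_{k-1} : Q ⟶ F^{1,k}`, the horizontal composite of `γ_k` with the row-`k` maps. -/
def Gamma (G : SepGrid M k) (hk : 2 ≤ k) : G.Q ⟶ G.F 1 k :=
  G.γ ≫ G.hIter k (k - 1) (k - 2) ≫ eqToHom (congrArg (fun t => G.F t k) (by omega : k - 1 - (k - 2) = 1))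

/-- `β_j : F^{j,k+1} ⟶ F^{j,j+2}`, the vertical composite. -/
def beta (G : SepGrid M k) (hk : 2 ≤ k) (j : ℕ) (hj : j ≤ k - 1) : G.F j (k + 1) ⟶ G.F j (j + 2) :=
  G.vIter j (k + 1) (k - 1 - j) ≫ eqToHom (congrArg (fun t => G.F j t) (by omega : k + 1 - (k - 1 - j) = j + 2))

/-- `Φ^j : F^{j,k+1} ⟶ F^{j,j+1}`, the full vertical composite. -/
def Phi (G : SepGrid M k) (hk : 2 ≤ k) (j : ℕ) (hj : j ≤ k - 1) : G.F j (k + 1) ⟶ G.F j (j + 1) :=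
  G.beta hk j hj ≫ G.d j (j + 2)

end SepGrid


/-- The composite of the top-row maps `P ⟶ F^{1,k+1}`. -/
def SepGrid.topRow {ℰ : Type u} [Category.{v} ℰ] [HasTerminal ℰ] {M : ModelStruct ℰ} {k : ℕ}
    (G : SepGrid M k) (hk : 2 ≤ k) : G.P ⟶ G.F 1 (k + 1) :=
  G.Pto ≫ G.hIter (k + 1) (k - 1) (k - 2) ≫
    eqToHom (congrArg (fun t => G.F t (k + 1)) (by omega : k - 1 - (k - 2) = 1))

section Aux

variable {ℰ : Type u} [Category.{v} ℰ]

lemma ModelStruct.weq_id' (M : ModelStruct ℰ) (X : ℰ) : M.weq (𝟙 X) := by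
  obtain ⟨Z, i, p, hc, hw, hf, hip⟩ := M.fact_acof_fib (𝟙 X)
  refine M.weq_retract (𝟙 X) i (Arrow.homMk (u := 𝟙 X) (v := i) (by simp))
    (Arrow.homMk (u := 𝟙 X) (v := p) (by simp [hip])) ?_ hw
  ext
  · simp
  · simp [hip]

/-- A map with left lifting property against all acyclic fibrations is a cofibration. -/
lemma ModelStruct.cof_of_llp (M : ModelStruct ℰ) {A B : ℰ} (i : A ⟶ B)
    (h : ∀ {X Y : ℰ} (p : X ⟶ Y), M.fib p → M.weq p → HasLiftingProperty i p) : M.cof i := by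
  obtain ⟨Z, g, q, hg, hq, hwq, hgq⟩ := M.fact_cof_afib i
  haveI := h q hq hwq
  have sq : CommSq g i q (𝟙 B) := ⟨by simp [hgq]⟩
  refine M.cof_retract i g (Arrow.homMk (u := 𝟙 A) (v := sq.lift) (by simpa using sq.fac_left.symm))
    (Arrow.homMk (u := 𝟙 A) (v := q) (by simp [hgq])) ?_ hg
  ext
  · simp
  · simpa using sq.fac_right

lemma ModelStruct.cof_comp (M : ModelStruct ℰ) {A B C : ℰ} {i : A ⟶ B} {i' : B ⟶ C}
    (hi : M.cof i) (hi' : M.cof i') : M.cof (i ≫ i') := by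
  refine M.cof_of_llp _ (fun p hp hwp => ?_)
  haveI := M.lift_cof_afib i p hi hp hwp
  haveI := M.lift_cof_afib i' p hi' hp hwp
  infer_instance

lemma ModelStruct.cof_inl [HasColimits ℰ] (M : ModelStruct ℰ) {T : ℰ} (hT : M.Cofibrant T) :
    M.cof (coprod.inl : T ⟶ T ⨿ T) := by
  refine M.cof_of_llp _ (fun p hp hwp => ?_)
  haveI := M.lift_cof_afib (initial.to T) p hT hp hwp
  constructor
  intro f g sq
  have sq' : CommSq (initial.to _) (initial.to T) p (coprod.inr ≫ g) :=
    ⟨by apply Limits.initial.hom_ext⟩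
  refine CommSq.HasLift.mk' ⟨coprod.desc f sq'.lift, coprod.inl_desc _ _, ?_⟩
  apply coprod.hom_ext
  · erw [← Category.assoc, coprod.inl_desc]; exact sq.w
  · erw [← Category.assoc, coprod.inr_desc]; exact sq'.fac_right

/-- Homotopy lifting: correcting a map within its homotopy class so that it lies
strictly over a given map, along a fibration, from a cofibrant domain. -/
lemma ModelStruct.correct [HasColimits ℰ] (M : ModelStruct ℰ) {T X Y : ℰ} (hT : M.Cofibrant T)
    {p : X ⟶ Y} (hp : M.fib p) {a : T ⟶ X} {b : T ⟶ Y}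
    (h : LeftHomotopic M (a ≫ p) b) :
    ∃ a' : T ⟶ X, a' ≫ p = b ∧ LeftHomotopic M a' a := by
  obtain ⟨C, i₁, i₂, pc, H, hcof, hwpc, h₁, h₂, hH₁, hH₂⟩ := h
  have hcof₁ : M.cof i₁ := by
    have : i₁ = coprod.inl ≫ coprod.desc i₁ i₂ := (coprod.inl_desc _ _).symm
    rw [this]
    exact M.cof_comp (M.cof_inl hT) hcof
  have hweq₁ : M.weq i₁ := by
    refine M.weq_cancel_right i₁ pc hwpc ?_
    rw [h₁]; exact M.weq_id' T
  haveI := M.lift_acof_fib i₁ p hcof₁ hweq₁ hp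
  have sq : CommSq a i₁ p H := ⟨hH₁.symm ▸ rfl⟩
  refine ⟨i₂ ≫ sq.lift, by rw [Category.assoc, sq.fac_right, hH₂], ?_⟩
  -- the reversed cylinder exhibits the homotopy `i₂ ≫ lift ∼ a`
  have hswap : M.cof (coprod.desc i₂ i₁) := by
    have : (coprod.desc i₂ i₁ : T ⨿ T ⟶ C) =
        (coprod.braiding T T).hom ≫ coprod.desc i₁ i₂ := by
      apply coprod.hom_ext
      · show coprod.inl ≫ coprod.desc i₂ i₁ = coprod.inl ≫ coprod.desc coprod.inr coprod.inl ≫ coprod.desc i₁ i₂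
        erw [coprod.inl_desc, coprod.inl_desc_assoc, coprod.inr_desc]
      · show coprod.inr ≫ coprod.desc i₂ i₁ = coprod.inr ≫ coprod.desc coprod.inr coprod.inl ≫ coprod.desc i₁ i₂
        erw [coprod.inr_desc, coprod.inr_desc_assoc, coprod.inl_desc]
    rw [this]
    refine M.cof_comp (M.cof_of_llp _ (fun q hq hwq => inferInstance)) hcof
  exact ⟨C, i₂, i₁, pc, sq.lift, hswap, hwpc, h₂, h₁, rfl, sq.fac_left⟩

end Aux

section GridAux

variable {ℰ : Type u} [Category.{v} ℰ] [HasTerminal ℰ] {M : ModelStruct ℰ} {k : ℕ}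

lemma SepGrid.eqToHom_u (G : SepGrid M k) {a b : ℕ} (h : a = b) (i : ℕ) :
    eqToHom (congrArg (fun t => G.F t i) h) ≫ G.u b i =
      G.u a i ≫ eqToHom (congrArg (fun t => G.F t i) (by rw [h]) :
        G.F (a - 1) i = G.F (b - 1) i) := by
  subst h; simp

lemma SepGrid.hIter_congr (G : SepGrid M k) (i j : ℕ) {m m' : ℕ} (h : m = m') :
    G.hIter i j m = G.hIter i j m' ≫
      eqToHom (congrArg (fun t => G.F t i) (by rw [h]) : G.F (j - m') i = G.F (j - m) i) := by
  subst h; simp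

lemma SepGrid.hIter_left (G : SepGrid M k) (i j : ℕ) : ∀ m : ℕ,
    G.hIter i (j + 1) (m + 1) = G.u (j + 1) i ≫ G.hIter i j m ≫
      eqToHom (congrArg (fun t => G.F t i) (by omega : j - m = j + 1 - (m + 1)))
  | 0 => by
    show G.hIter i (j + 1) 0 ≫ G.u (j + 1 - 0) i = _
    simp [SepGrid.hIter]
  | m + 1 => by
    show G.hIter i (j + 1) (m + 1) ≫ G.u (j + 1 - (m + 1)) i = _
    rw [G.hIter_left i j m, Category.assoc, Category.assoc,
      G.eqToHom_u (by omega : j - m = j + 1 - (m + 1)) i]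
    show _ = G.u (j+1) i ≫ (G.hIter i j m ≫ G.u (j - m) i) ≫ _
    simp only [Category.assoc]


lemma SepGrid.hIter_eq_step (G : SepGrid M k) (i j : ℕ) (m m' a : ℕ)
    (hm : m = m' + 1) (h : j - m' = a + 1) :
    G.hIter i j m ≫ eqToHom (congrArg (fun t => G.F t i) (by omega : j - m = a)) =
    G.hIter i j m' ≫ eqToHom (congrArg (fun t => G.F t i) h) ≫ G.u (a + 1) i := by
  subst hm
  show (G.hIter i j m' ≫ G.u (j - m') i) ≫ _ = _
  rw [G.eqToHom_u h i]
  simp only [Category.assoc]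

end GridAux

/-- STATEMENT 11 (Corollary to the Separation Lemma) -/
theorem separation_corollary {ℰ : Type u} [Category.{v} ℰ] [HasLimits ℰ] [HasColimits ℰ]
    (M : ModelStruct ℰ) (k : ℕ) (hk : 2 ≤ k) (G : SepGrid M k)
    (T : ℰ) (hT : M.Cofibrant T) (η : T ⟶ G.Q) (κ₀ : T ⟶ G.F 0 (k + 1))
    (h₀ : LeftHomotopic M (κ₀ ≫ G.beta hk 0 (Nat.zero_le _)) (η ≫ G.φ 1 ≫ G.u 1 2))
    (κ₁ : T ⟶ G.F 1 (k + 1))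
    (hκu : κ₁ ≫ G.u 1 (k + 1) = κ₀)
    (hκΦ : LeftHomotopic M (κ₁ ≫ G.Phi hk 1 (by omega)) (η ≫ G.φ 1))
    -- the equivalent conditions of the Separation Lemma hold:
    (hΓ : LeftHomotopic M (κ₁ ≫ G.d 1 (k + 1)) (η ≫ G.Gamma hk)) :
    -- after changing `κ₁` within its homotopy class, `η` lifts along `p_{k-1}`
    ∃ (κ₁' : T ⟶ G.F 1 (k + 1)) (f : T ⟶ G.P),
      LeftHomotopic M κ₁' κ₁ ∧
      f ≫ G.pP = η ∧
      f ≫ G.topRow hk = κ₁' := by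
  -- Step 1: correct `κ₁` within its left homotopy class so that it lies strictly
  -- over `η ≫ Γ_{k-1}`.
  have hfib : M.fib (G.d 1 (k + 1)) := G.vert_top_fib 1 (by omega)
  obtain ⟨κ₁', hκ', hhom⟩ := M.correct hT hfib hΓ
  -- Step 2: inductive lifting along the pullback grid, from `F^{1,k+1}` up to `F^{k-1,k+1}`.
  have claim : ∀ j' j : ℕ, ∀ (hj : j = j' + 1) (hjk : j ≤ k - 1),
      ∃ lam : T ⟶ G.F j (k + 1),
        lam ≫ G.hIter (k + 1) j j' ≫
          eqToHom (congrArg (fun t => G.F t (k + 1)) (by omega : j - j' = 1)) = κ₁' ∧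
        lam ≫ G.d j (k + 1) = η ≫ G.γ ≫ G.hIter k (k - 1) (k - 1 - j) ≫
          eqToHom (congrArg (fun t => G.F t k) (by omega : k - 1 - (k - 1 - j) = j)) := by
    intro j'
    induction j' with
    | zero =>
      intro j hj hjk; subst hj
      refine ⟨κ₁', ?_, ?_⟩
      · simp [SepGrid.hIter]
      · rw [hκ', G.hIter_congr k (k - 1) (show k - 1 - (0 + 1) = k - 2 by omega)]
        simp only [SepGrid.Gamma, Category.assoc, eqToHom_trans]
    | succ j' ih =>
      intro j hj hjk; subst hj
      obtain ⟨lam, h1, h2⟩ := ih (j' + 1) rfl (by omega)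
      have hsq := G.squares (j' + 2) (k + 1) (by omega) (by omega) (by omega) (by omega)
      have hcomm : lam ≫ G.d (j' + 1) (k + 1) =
          (η ≫ G.γ ≫ G.hIter k (k - 1) (k - 1 - (j' + 2)) ≫
            eqToHom (congrArg (fun t => G.F t k)
              (by omega : k - 1 - (k - 1 - (j' + 2)) = j' + 2))) ≫ G.u (j' + 2) k := by
        rw [h2, G.hIter_eq_step k (k - 1) (k - 1 - (j' + 1)) (k - 1 - (j' + 2)) (j' + 1)
          (by omega) (by omega)]
        simp only [Category.assoc]
        try rfl
      refine ⟨hsq.lift lam _ hcomm, ?_, ?_⟩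
      · rw [show G.hIter (k + 1) (j' + 1 + 1) (j' + 1) = G.u (j' + 1 + 1) (k + 1) ≫
            G.hIter (k + 1) (j' + 1) j' ≫ eqToHom (congrArg (fun t => G.F t (k + 1))
              (by omega : j' + 1 - j' = j' + 1 + 1 - (j' + 1))) from G.hIter_left (k + 1) (j' + 1) j']
        simp only [Category.assoc]
        rw [hsq.lift_fst_assoc]
        simp only [eqToHom_trans]
        exact h1
      · exact hsq.lift_snd _ _ _
  obtain ⟨lam, h1, h2⟩ := claim (k - 2) (k - 1) (by omega) le_rfl
  rw [G.hIter_congr k (k - 1) (by omega : k - 1 - (k - 1) = 0)] at h2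
  simp only [SepGrid.hIter, Category.id_comp, eqToHom_trans, eqToHom_refl, Category.comp_id] at h2
  have hf : lam ≫ G.d (k - 1) (k + 1) = η ≫ G.γ := h2
  refine ⟨κ₁', G.left_square.lift lam η hf, hhom, G.left_square.lift_snd _ _ _, ?_⟩
  rw [SepGrid.topRow, ← Category.assoc, G.left_square.lift_fst]
  exact h1

end
end

section
/- (Homotopy Pullback Property.) Let ℰ be a model category, T a cofibrant object, and let W be the pullback of a fibration q : Y → Z along a map i : X → Z, with projections j : W → Y and r : W → X (so that r is also a fibration). Given maps p : T → X and f : T → Y, the composite q∘f is left homotopic to i∘p if and only if there exists a map g : T → W with r∘g = p and with j∘g left homotopic to f. -/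
open CategoryTheory CategoryTheory.Limits

universe v u

noncomputable section

variable {ℰ : Type u} [Category.{v} ℰ]

variable {J : Type} [SmallCategory J]

variable [HasLimits ℰ]

section Aux

variable {𝒞 : Type u} [Category.{v} 𝒞]

lemma aux_weq_id (M : ModelStruct 𝒞) (X : 𝒞) : M.weq (𝟙 X) := by
  obtain ⟨Z, ii, pp, _, hwi, _, hip⟩ := M.fact_acof_fib (𝟙 X)
  refine M.weq_retract (𝟙 X) ii (Arrow.homMk (u := 𝟙 X) (v := ii) (by simp))
    (Arrow.homMk (u := 𝟙 X) (v := pp) (by simp [hip])) ?_ hwi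
  ext
  · simp
  · simp [hip]

lemma aux_cof_of_llp (M : ModelStruct 𝒞) {A B : 𝒞} (f : A ⟶ B)
    (h : ∀ {X Y : 𝒞} (p : X ⟶ Y), M.fib p → M.weq p → HasLiftingProperty f p) :
    M.cof f := by
  obtain ⟨Zc, ic, pc, hci, hfp, hwp, hip⟩ := M.fact_cof_afib f
  haveI := h pc hfp hwp
  have sq : CommSq ic f pc (𝟙 B) := ⟨by simp [hip]⟩
  refine M.cof_retract f ic
    (Arrow.homMk (u := 𝟙 A) (v := sq.lift) (by simp [sq.fac_left]))
    (Arrow.homMk (u := 𝟙 A) (v := pc) (by simp [hip])) ?_ hci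
  ext
  · simp
  · simp [sq.fac_right]

lemma aux_cof_comp (M : ModelStruct 𝒞) {A B C : 𝒞} {f : A ⟶ B} {g : B ⟶ C}
    (hf : M.cof f) (hg : M.cof g) : M.cof (f ≫ g) := by
  apply aux_cof_of_llp
  intro X Y pp hfib hw
  haveI := M.lift_cof_afib f pp hf hfib hw
  haveI := M.lift_cof_afib g pp hg hfib hw
  infer_instance

lemma aux_cof_iso_comp (M : ModelStruct 𝒞) {A B C : 𝒞} (e : A ⟶ B) [IsIso e]
    {g : B ⟶ C} (hg : M.cof g) : M.cof (e ≫ g) := by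
  apply aux_cof_of_llp
  intro X Y pp hfib hw
  haveI := M.lift_cof_afib g pp hg hfib hw
  infer_instance

lemma aux_cof_inl (M : ModelStruct 𝒞) [HasInitial 𝒞] [HasBinaryCoproducts 𝒞] {T : 𝒞}
    (hT : M.Cofibrant T) : M.cof (coprod.inl : T ⟶ T ⨿ T) := by
  apply aux_cof_of_llp
  intro X Y pp hfib hw
  haveI := M.lift_cof_afib _ pp hT hfib hw
  constructor
  intro u v sq
  have sq2 : CommSq (initial.to X) (initial.to T) pp (coprod.inr ≫ v) :=
    ⟨initial.hom_ext _ _⟩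
  refine ⟨⟨⟨coprod.desc u sq2.lift, by rw [coprod.inl_desc], ?_⟩⟩⟩
  ext
  · rw [coprod.inl_desc_assoc]; exact sq.w
  · rw [coprod.inr_desc_assoc]; exact sq2.fac_right

lemma aux_lh_symm (M : ModelStruct 𝒞) [HasBinaryCoproducts 𝒞] {X Y : 𝒞} {f g : X ⟶ Y}
    (h : LeftHomotopic M f g) : LeftHomotopic M g f := by
  obtain ⟨C, i₁, i₂, pc, H, hc, hw, h1, h2, hf, hg⟩ := h
  refine ⟨C, i₂, i₁, pc, H, ?_, hw, h2, h1, hg, hf⟩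
  have he : (coprod.desc i₂ i₁ : X ⨿ X ⟶ C) =
      (coprod.braiding X X).hom ≫ coprod.desc i₁ i₂ := by
    ext
    · rw [coprod.braiding_hom, coprod.inl_desc_assoc, coprod.inr_desc, coprod.inl_desc]
    · rw [coprod.braiding_hom, coprod.inr_desc_assoc, coprod.inl_desc, coprod.inr_desc]
  rw [he]
  exact aux_cof_iso_comp M _ hc

lemma aux_lh_comp (M : ModelStruct 𝒞) [HasBinaryCoproducts 𝒞] {X Y Z : 𝒞} {f g : X ⟶ Y}
    (h : LeftHomotopic M f g) (k : Y ⟶ Z) : LeftHomotopic M (f ≫ k) (g ≫ k) := by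
  obtain ⟨C, i₁, i₂, pc, H, hc, hw, h1, h2, hf, hg⟩ := h
  exact ⟨C, i₁, i₂, pc, H ≫ k, hc, hw, h1, h2, by rw [← hf]; simp, by rw [← hg]; simp⟩

end Aux

/-- STATEMENT 17 (Homotopy Pullback Property) -/
theorem homotopy_pullback_property {ℰ : Type u} [Category.{v} ℰ]
    [HasLimits ℰ] [HasColimits ℰ] (M : ModelStruct ℰ)
    (T : ℰ) (hT : M.Cofibrant T)
    {W X Y Z : ℰ} (j : W ⟶ Y) (r : W ⟶ X) (q : Y ⟶ Z) (i : X ⟶ Z)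
    (hq : M.fib q) (hpb : IsPullback j r q i)
    (p : T ⟶ X) (f : T ⟶ Y) :
    LeftHomotopic M (f ≫ q) (p ≫ i) ↔
      ∃ g : T ⟶ W, g ≫ r = p ∧ LeftHomotopic M (g ≫ j) f := by
  constructor
  · rintro ⟨C, i₁, i₂, pc, H, hc, hw, h1, h2, hf, hg⟩
    have hwi₁ : M.weq i₁ := M.weq_cancel_right i₁ pc hw (by rw [h1]; exact aux_weq_id M T)
    have hci₁ : M.cof i₁ := by
      have : i₁ = coprod.inl ≫ coprod.desc i₁ i₂ := by rw [coprod.inl_desc]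
      rw [this]
      exact aux_cof_comp M (aux_cof_inl M hT) hc
    haveI := M.lift_acof_fib i₁ q hci₁ hwi₁ hq
    have sq : CommSq f i₁ q H := ⟨by rw [hf]⟩
    have hK1 : i₁ ≫ sq.lift = f := sq.fac_left
    have hK2 : sq.lift ≫ q = H := sq.fac_right
    have hcomm : (i₂ ≫ sq.lift) ≫ q = p ≫ i := by rw [Category.assoc, hK2, hg]
    refine ⟨hpb.lift (i₂ ≫ sq.lift) p hcomm, hpb.lift_snd _ _ _, ?_⟩
    apply aux_lh_symm
    rw [hpb.lift_fst]
    exact ⟨C, i₁, i₂, pc, sq.lift, hc, hw, h1, h2, hK1, rfl⟩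
  · rintro ⟨g, hgr, hh⟩
    have h1 : LeftHomotopic M ((g ≫ j) ≫ q) (f ≫ q) := aux_lh_comp M hh q
    have h2 : (g ≫ j) ≫ q = p ≫ i := by
      rw [Category.assoc, hpb.w, ← Category.assoc, hgr]
    rw [h2] at h1
    exact aux_lh_symm M h1

end
end

section
/- (Homotopy Ladder Property.) Let ℰ be a model category and T a cofibrant object. Suppose given two stacked pullback squares: U is the pullback of t : V → X along the fibration p : W → X, with projections r : U → V (a fibration) and Φ : U → W; and W is the pullback of s : X → Z along the fibration u : Y → Z, with projections p : W → X and q : W → Y. Given maps σ : T → V, θ : T → W and φ : T → Y such that the outer diagram commutes up to left homotopy, consider the statements: (1) there exists κ : T → U with σ = r∘κ and left homotopies θ ∼ˡ Φ∘κ and φ ∼ˡ q∘Φ∘κ; (2) φ ∼ˡ q∘θ, and there exists θ′ : T → W left homotopic to θ with p∘θ′ = t∘σ; (3) there exists θ′ : T → W left homotopic to θ such that φ is left homotopic to φ′ := q∘θ′ and u∘φ′ = s∘t∘σ. Then (1) and (2) are equivalent, and each implies (3); if moreover s is a monomorphism, then (1), (2) and (3) are all equivalent. -/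
open CategoryTheory CategoryTheory.Limits

universe v u

noncomputable section

variable {ℰ : Type u} [Category.{v} ℰ]

variable {J : Type} [SmallCategory J]

variable [HasLimits ℰ]

namespace HLP

/-- Extract a lift from a lifting property and a commutative square. -/
lemma getLift {𝒞 : Type u} [Category.{v} 𝒞] {A B X Y : 𝒞} {i : A ⟶ B} {p : X ⟶ Y}
    (hlp : HasLiftingProperty i p) {f : A ⟶ X} {g : B ⟶ Y} (sq : CommSq f i p g) :
    ∃ l : B ⟶ X, i ≫ l = f ∧ l ≫ p = g := by
  obtain ⟨⟨l, h1, h2⟩⟩ := (hlp.sq_hasLift sq).exists_lift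
  exact ⟨l, h1, h2⟩

end HLP

section HomotopyLadderAux

namespace HLP

variable {𝒞 : Type u} [Category.{v} 𝒞] (M : ModelStruct 𝒞)

/-- The identity is a weak equivalence. -/
lemma weq_id (X : 𝒞) : M.weq (𝟙 X) := by
  obtain ⟨Z, i, p, _, _, hwp, hip⟩ := M.fact_cof_afib (𝟙 X)
  exact M.weq_retract (𝟙 X) p
    (Arrow.homMk (u := i) (v := 𝟙 X) (by simp [hip]))
    (Arrow.homMk (u := p) (v := 𝟙 X) (by simp))
    (by ext <;> simp [hip]) hwp

/-- A map with the left lifting property against all acyclic fibrations is a cofibration. -/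
lemma cof_of_llp {A B : 𝒞} (f : A ⟶ B)
    (h : ∀ {X Y : 𝒞} (p : X ⟶ Y), M.fib p → M.weq p → HasLiftingProperty f p) :
    M.cof f := by
  obtain ⟨Z, i, p, hci, hfp, hwp, hip⟩ := M.fact_cof_afib f
  have sq : CommSq i f p (𝟙 B) := ⟨by simp [hip]⟩
  obtain ⟨l, hl1, hl2⟩ := getLift (h p hfp hwp) sq
  exact M.cof_retract f i
    (Arrow.homMk (u := 𝟙 A) (v := l) (by simpa using hl1.symm))
    (Arrow.homMk (u := 𝟙 A) (v := p) (by simp [hip]))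
    (by ext <;> simp [hl2]) hci

/-- A map with the left lifting property against all fibrations is an acyclic cofibration. -/
lemma acof_of_llp {A B : 𝒞} (f : A ⟶ B)
    (h : ∀ {X Y : 𝒞} (p : X ⟶ Y), M.fib p → HasLiftingProperty f p) :
    M.cof f ∧ M.weq f := by
  obtain ⟨Z, i, p, hci, hwi, hfp, hip⟩ := M.fact_acof_fib f
  have sq : CommSq i f p (𝟙 B) := ⟨by simp [hip]⟩
  obtain ⟨l, hl1, hl2⟩ := getLift (h p hfp) sq
  constructor
  · exact M.cof_retract f i
      (Arrow.homMk (u := 𝟙 A) (v := l) (by simpa using hl1.symm))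
      (Arrow.homMk (u := 𝟙 A) (v := p) (by simp [hip]))
      (by ext <;> simp [hl2]) hci
  · exact M.weq_retract f i
      (Arrow.homMk (u := 𝟙 A) (v := l) (by simpa using hl1.symm))
      (Arrow.homMk (u := 𝟙 A) (v := p) (by simp [hip]))
      (by ext <;> simp [hl2]) hwi

/-- Left lifting properties are stable under pushout. -/
lemma llp_of_isPushout {A B C D X Y : 𝒞} {f : A ⟶ B} {g : A ⟶ C} {h : B ⟶ D} {k : C ⟶ D}
    (hpo : IsPushout f g h k) (p : X ⟶ Y) [hf : HasLiftingProperty f p] :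
    HasLiftingProperty k p := by
  constructor
  intro u v sq
  have sq' : CommSq (g ≫ u) f p (h ≫ v) :=
    ⟨by rw [Category.assoc, sq.w, ← Category.assoc, ← hpo.w, Category.assoc]⟩
  obtain ⟨l, hl1, hl2⟩ := getLift hf sq' 
  refine CommSq.HasLift.mk' ⟨hpo.desc l u hl1, hpo.inr_desc _ _ _, ?_⟩
  apply hpo.hom_ext
  · rw [← Category.assoc, hpo.inl_desc, hl2]
  · rw [← Category.assoc, hpo.inr_desc, sq.w]

/-- If `T` is cofibrant, the first coprojection `T ⟶ T ⨿ T` is a cofibration. -/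
lemma cof_inl [HasBinaryCoproducts 𝒞] [HasInitial 𝒞] {T : 𝒞} (hT : M.Cofibrant T) :
    M.cof (coprod.inl : T ⟶ T ⨿ T) := by
  apply cof_of_llp
  intro X Y p hfp hwp
  constructor
  intro u v sq
  have sq2 : CommSq (initial.to X) (initial.to T) p (coprod.inr ≫ v) :=
    ⟨initial.hom_ext _ _⟩
  obtain ⟨l₂, -, hl₂⟩ := getLift (M.lift_cof_afib _ p hT hfp hwp) sq2
  refine CommSq.HasLift.mk' ⟨coprod.desc u l₂, by simp [coprod.inl_desc], ?_⟩
  apply coprod.hom_ext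
  · rw [← Category.assoc, coprod.inl_desc, sq.w]
  · rw [← Category.assoc, coprod.inr_desc, hl₂]

variable {M}

/-- If `T` is cofibrant and `(i₁, i₂)` is a cylinder cofibration, then `i₁` is a cofibration. -/
lemma cof_left_incl [HasBinaryCoproducts 𝒞] [HasInitial 𝒞] {T C : 𝒞} (hT : M.Cofibrant T)
    {i₁ i₂ : T ⟶ C} (hc : M.cof (coprod.desc i₁ i₂)) : M.cof i₁ := by
  apply cof_of_llp
  intro X Y p hfp hwp
  haveI := M.lift_cof_afib _ p (cof_inl M hT) hfp hwp
  haveI := M.lift_cof_afib _ p hc hfp hwp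
  have e : (coprod.inl : T ⟶ T ⨿ T) ≫ coprod.desc i₁ i₂ = i₁ := coprod.inl_desc _ _
  rw [← e]
  infer_instance

lemma LeftHomotopic.postcomp [HasBinaryCoproducts 𝒞] {X Y Z : 𝒞} {f g : X ⟶ Y}
    (h : LeftHomotopic M f g) (k : Y ⟶ Z) : LeftHomotopic M (f ≫ k) (g ≫ k) := by
  obtain ⟨C, i₁, i₂, pr, H, hc, hw, h1, h2, h3, h4⟩ := h
  exact ⟨C, i₁, i₂, pr, H ≫ k, hc, hw, h1, h2,
    by rw [← Category.assoc, h3], by rw [← Category.assoc, h4]⟩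

lemma LeftHomotopic.symm' [HasBinaryCoproducts 𝒞] {X Y : 𝒞} {f g : X ⟶ Y}
    (h : LeftHomotopic M f g) : LeftHomotopic M g f := by
  obtain ⟨C, i₁, i₂, pr, H, hc, hw, h1, h2, h3, h4⟩ := h
  refine ⟨C, i₂, i₁, pr, H, ?_, hw, h2, h1, h4, h3⟩
  apply cof_of_llp
  intro Xp Yp p hfp hwp
  have hlpc := M.lift_cof_afib _ p hc hfp hwp
  constructor
  intro u v sq
  have sw : coprod.desc (coprod.inr : X ⟶ X ⨿ X) coprod.inl ≫ coprod.desc i₂ i₁ =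
      coprod.desc i₁ i₂ := by
    apply coprod.hom_ext <;> simp [coprod.inl_desc, coprod.inr_desc]
  have sq' : CommSq (coprod.desc (coprod.inr : X ⟶ X ⨿ X) coprod.inl ≫ u)
      (coprod.desc i₁ i₂) p v :=
    ⟨by rw [Category.assoc, sq.w, ← Category.assoc, sw]⟩
  obtain ⟨l, hl1, hl2⟩ := getLift hlpc sq'
  refine CommSq.HasLift.mk' ⟨l, ?_, hl2⟩
  apply coprod.hom_ext
  · have := coprod.inr ≫= hl1
    simpa [coprod.inl_desc, coprod.inr_desc] using this
  · have := coprod.inl ≫= hl1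
    simpa [coprod.inl_desc, coprod.inr_desc] using this

/-- Transitivity of left homotopy with cofibrant source. -/
lemma LeftHomotopic.trans' [HasColimits 𝒞] {T Y : 𝒞} (hT : M.Cofibrant T)
    {f g h : T ⟶ Y} (h₁ : LeftHomotopic M f g) (h₂ : LeftHomotopic M g h) :
    LeftHomotopic M f h := by
  obtain ⟨C₁, i₁, i₂, p₁, H₁, hc₁, hw₁, e11, e12, e13, e14⟩ := h₁
  obtain ⟨C₂, i₁', i₂', p₂, H₂, hc₂, hw₂, e21, e22, e23, e24⟩ := h₂
  have wid : M.weq (𝟙 T) := weq_id M T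
  have wi₁ : M.weq i₁ := M.weq_cancel_right i₁ p₁ hw₁ (by rw [e11]; exact wid)
  have wi₁' : M.weq i₁' := M.weq_cancel_right i₁' p₂ hw₂ (by rw [e21]; exact wid)
  have ci₁ : M.cof i₁ := cof_left_incl hT hc₁
  have ci₁' : M.cof i₁' := cof_left_incl hT hc₂
  -- glue the two cylinders
  set P := pushout i₂ i₁' with hP
  have hpo : IsPushout i₂ i₁' (pushout.inl i₂ i₁') (pushout.inr i₂ i₁') :=
    IsPushout.of_hasPushout i₂ i₁'
  set j₁ : T ⟶ P := i₁ ≫ pushout.inl i₂ i₁' with hj₁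
  set j₂ : T ⟶ P := i₂' ≫ pushout.inr i₂ i₁' with hj₂
  have wpr : i₂ ≫ p₁ = i₁' ≫ p₂ := by rw [e12, e21]
  have wH : i₂ ≫ H₁ = i₁' ≫ H₂ := by rw [e14, e23]
  -- the inclusion `pushout.inl` is a weak equivalence
  have winl : M.weq (pushout.inl i₂ i₁') := by
    refine (acof_of_llp M _ ?_).2
    intro X' Y' pp hfpp
    haveI := M.lift_acof_fib _ pp ci₁' wi₁' hfpp
    exact llp_of_isPushout hpo.flip pp
  have wj₁ : M.weq j₁ := M.weq_comp _ _ wi₁ winl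
  have hj₁pr : j₁ ≫ hpo.desc p₁ p₂ wpr = 𝟙 T := by
    rw [hj₁, Category.assoc, hpo.inl_desc, e11]
  refine ⟨P, j₁, j₂, hpo.desc p₁ p₂ wpr, hpo.desc H₁ H₂ wH, ?_, ?_, hj₁pr, ?_, ?_, ?_⟩
  · -- cofibration
    apply cof_of_llp
    intro X' Y' pp hfpp hwpp
    have L₁ := M.lift_cof_afib _ pp ci₁ hfpp hwpp
    have L₂ := M.lift_cof_afib _ pp hc₂ hfpp hwpp
    constructor
    intro u v sq
    have squ1 : coprod.inl ≫ u ≫ pp = j₁ ≫ v := by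
      rw [sq.w, ← Category.assoc, coprod.inl_desc]
    have squ2 : coprod.inr ≫ u ≫ pp = j₂ ≫ v := by
      rw [sq.w, ← Category.assoc, coprod.inr_desc]
    have sq₁ : CommSq (coprod.inl ≫ u) i₁ pp (pushout.inl i₂ i₁' ≫ v) :=
      ⟨by rw [Category.assoc, squ1, hj₁, Category.assoc]⟩
    obtain ⟨l₁, hla, hlb⟩ := getLift L₁ sq₁
    have sq₂ : CommSq (coprod.desc (i₂ ≫ l₁) (coprod.inr ≫ u)) (coprod.desc i₁' i₂') pp
        (pushout.inr i₂ i₁' ≫ v) := by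
      constructor
      apply coprod.hom_ext
      · rw [← Category.assoc, coprod.inl_desc, ← Category.assoc, coprod.inl_desc,
          Category.assoc, hlb, ← Category.assoc, ← Category.assoc, ← hpo.w]
      · rw [← Category.assoc, coprod.inr_desc, ← Category.assoc, coprod.inr_desc,
          Category.assoc, squ2, hj₂, Category.assoc]
    obtain ⟨l₂, hlc, hld⟩ := getLift L₂ sq₂
    have hglue : i₂ ≫ l₁ = i₁' ≫ l₂ := by
      have := coprod.inl ≫= hlc
      simpa [coprod.inl_desc, coprod.inr_desc] using this.symm
    refine CommSq.HasLift.mk' ⟨hpo.desc l₁ l₂ hglue, ?_, ?_⟩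
    · apply coprod.hom_ext
      · rw [← Category.assoc, coprod.inl_desc, hj₁, Category.assoc, hpo.inl_desc, hla]
      · rw [← Category.assoc, coprod.inr_desc, hj₂, Category.assoc, hpo.inr_desc]
        have := coprod.inr ≫= hlc
        simpa [coprod.inl_desc, coprod.inr_desc] using this
    · apply hpo.hom_ext
      · rw [← Category.assoc, hpo.inl_desc, hlb]
      · rw [← Category.assoc, hpo.inr_desc, hld]
  · -- the projection is a weak equivalence
    exact M.weq_cancel_left j₁ _ wj₁ (by rw [hj₁pr]; exact wid)
  · rw [hj₂, Category.assoc, hpo.inr_desc, e22]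
  · rw [hj₁, Category.assoc, hpo.inl_desc, e13]
  · rw [hj₂, Category.assoc, hpo.inr_desc, e24]

end HLP

end HomotopyLadderAux


/-- STATEMENT 18 (Homotopy Ladder Property) -/
theorem homotopy_ladder_property {ℰ : Type u} [Category.{v} ℰ]
    [HasLimits ℰ] [HasColimits ℰ] (M : ModelStruct ℰ)
    (T : ℰ) (hT : M.Cofibrant T)
    {U V W X Y Z : ℰ}
    (r : U ⟶ V) (Φ : U ⟶ W) (t : V ⟶ X) (p : W ⟶ X)
    (q : W ⟶ Y) (s : X ⟶ Z) (u : Y ⟶ Z)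
    (hp : M.fib p) (hu : M.fib u) (hr : M.fib r)
    (hpb₁ : IsPullback r Φ t p) (hpb₂ : IsPullback p q s u)
    (σ : T ⟶ V) (θ : T ⟶ W) (φ : T ⟶ Y)
    -- the outer diagram commutes up to left homotopy
    (houter : LeftHomotopic M (φ ≫ u) (σ ≫ t ≫ s)) :
    -- (1) ↔ (2), (2) → (3), and if `s` is a monomorphism all three are equivalent
    ((∃ κ : T ⟶ U, σ = κ ≫ r ∧ LeftHomotopic M θ (κ ≫ Φ) ∧
        LeftHomotopic M φ (κ ≫ Φ ≫ q)) ↔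
      (LeftHomotopic M φ (θ ≫ q) ∧
        ∃ θ' : T ⟶ W, LeftHomotopic M θ' θ ∧ θ' ≫ p = σ ≫ t)) ∧
    ((LeftHomotopic M φ (θ ≫ q) ∧
        ∃ θ' : T ⟶ W, LeftHomotopic M θ' θ ∧ θ' ≫ p = σ ≫ t) →
      (∃ θ' : T ⟶ W, LeftHomotopic M θ' θ ∧
        LeftHomotopic M φ (θ' ≫ q) ∧ (θ' ≫ q) ≫ u = σ ≫ t ≫ s)) ∧
    (Mono s →
      ((∃ θ' : T ⟶ W, LeftHomotopic M θ' θ ∧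
          LeftHomotopic M φ (θ' ≫ q) ∧ (θ' ≫ q) ≫ u = σ ≫ t ≫ s) →
        (LeftHomotopic M φ (θ ≫ q) ∧
          ∃ θ' : T ⟶ W, LeftHomotopic M θ' θ ∧ θ' ≫ p = σ ≫ t))) := by
  have w₁ : r ≫ t = Φ ≫ p := hpb₁.w
  have w₂ : p ≫ s = q ≫ u := hpb₂.w
  have main12 : (∃ κ : T ⟶ U, σ = κ ≫ r ∧ LeftHomotopic M θ (κ ≫ Φ) ∧
        LeftHomotopic M φ (κ ≫ Φ ≫ q)) ↔
      (LeftHomotopic M φ (θ ≫ q) ∧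
        ∃ θ' : T ⟶ W, LeftHomotopic M θ' θ ∧ θ' ≫ p = σ ≫ t) := by
    constructor
    · rintro ⟨κ, hσ, hθ, hφ⟩
      have hθq : LeftHomotopic M (θ ≫ q) (κ ≫ Φ ≫ q) := by
        simpa only [Category.assoc] using HLP.LeftHomotopic.postcomp hθ q
      refine ⟨HLP.LeftHomotopic.trans' hT hφ (HLP.LeftHomotopic.symm' hθq), κ ≫ Φ,
        HLP.LeftHomotopic.symm' hθ, ?_⟩
      rw [Category.assoc, ← w₁, ← Category.assoc, ← hσ]
    · rintro ⟨hφθ, θ', hθ', hθ'p⟩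
      refine ⟨hpb₁.lift σ θ' hθ'p.symm, (hpb₁.lift_fst _ _ _).symm, ?_, ?_⟩
      · rw [hpb₁.lift_snd]
        exact HLP.LeftHomotopic.symm' hθ'
      · have e : hpb₁.lift σ θ' hθ'p.symm ≫ Φ ≫ q = θ' ≫ q := by
          rw [← Category.assoc, hpb₁.lift_snd]
        rw [e]
        exact HLP.LeftHomotopic.trans' hT hφθ
          (HLP.LeftHomotopic.symm' (HLP.LeftHomotopic.postcomp hθ' q))
  refine ⟨main12, ?_, ?_⟩
  · rintro ⟨hφθ, θ', hθ', hθ'p⟩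
    refine ⟨θ', hθ', HLP.LeftHomotopic.trans' hT hφθ
      (HLP.LeftHomotopic.symm' (HLP.LeftHomotopic.postcomp hθ' q)), ?_⟩
    rw [Category.assoc, ← w₂, ← Category.assoc, hθ'p, Category.assoc]
  · rintro hs ⟨θ', hθ', hφ', hu'⟩
    have hp' : θ' ≫ p = σ ≫ t := by
      rw [← cancel_mono s, Category.assoc, w₂, ← Category.assoc, hu', Category.assoc]
    exact ⟨HLP.LeftHomotopic.trans' hT hφ' (HLP.LeftHomotopic.postcomp hθ' q),
      θ', hθ', hp'⟩

end
end
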